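/- For each s ∈ [r], the map ∂σ_{e_s} + σ_{e_s}∂ equals multiplication by a_s on the pivot resolution T_{1,…,l}. -/
import Mathlib


open MvPolynomial Finset

noncomputable section

/-- `fsign A B` is `0` if `A ∩ B ≠ ∅`, and otherwise `(−1)^{p(A,B)}` where `p(A,B)`
is the number of pairs `(a,b) ∈ A × B` with `a > b`. -/
def fsign {α : Type*} [LinearOrder α] [DecidableEq α] (A B : Finset α) : ℤ :=
  if A ∩ B = ∅ then (-1 : ℤ) ^ (((A ×ˢ B).filter fun p => p.2 < p.1).card) else 0

/-- The total module underlying the Taylor complex: free over `Q = k[x_1,…,x_n]`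
with basis `ε_τ` indexed by all subsets `τ ⊆ [q]`. -/
abbrev TotMod (k : Type*) [Field k] (n q : ℕ) : Type _ :=
  Finset (Fin q) →₀ MvPolynomial (Fin n) k

/-- `m_τ = lcm{m_i : i ∈ τ}`, where `m_i` is the monomial with exponent vector `D i`. -/
def lcmMono (k : Type*) [Field k] (n q : ℕ) (D : Fin q → (Fin n →₀ ℕ))
    (τ : Finset (Fin q)) : MvPolynomial (Fin n) k :=
  monomial (τ.sup D) (1 : k)

/-- The monomial ideal `I = (m_1, …, m_q)`. -/
def monIdeal (k : Type*) [Field k] (n q : ℕ) (D : Fin q → (Fin n →₀ ℕ)) :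
    Ideal (MvPolynomial (Fin n) k) :=
  Ideal.span (Set.range fun i => monomial (D i) (1 : k))

/-- The Taylor differential `∂(ε_τ) = Σ_{j∈τ} sign(j, τ∖{j}) (m_τ/m_{τ∖{j}}) ε_{τ∖{j}}`,
as a linear endomorphism of the total module. -/
def taylorD (k : Type*) [Field k] (n q : ℕ) (D : Fin q → (Fin n →₀ ℕ)) :
    TotMod k n q →ₗ[MvPolynomial (Fin n) k] TotMod k n q :=
  Finsupp.linearCombination _ fun τ =>
    ∑ j ∈ τ, Finsupp.single (τ \ {j})
      ((fsign {j} (τ \ {j}) : MvPolynomial (Fin n) k) *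
        monomial (τ.sup D - (τ \ {j}).sup D) (1 : k))

/-- The degree-`i` piece of the subcomplex of the Taylor complex spanned by the
`ε_τ` with `τ ∈ Ω`: the free submodule with basis `{ε_τ : τ ∈ Ω, |τ| = i}`. -/
def piece (k : Type*) [Field k] (n q : ℕ) (Ω : Set (Finset (Fin q))) (i : ℕ) :
    Submodule (MvPolynomial (Fin n) k) (TotMod k n q) :=
  Finsupp.supported _ _ {τ | τ ∈ Ω ∧ τ.card = i}

/-- The subcomplex of the Taylor complex spanned by all `ε_τ` with `τ ∈ Ω`. -/
def subcx (k : Type*) [Field k] (n q : ℕ) (Ω : Set (Finset (Fin q))) :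
    Submodule (MvPolynomial (Fin n) k) (TotMod k n q) :=
  Finsupp.supported _ _ Ω

/-- The index family of the pivot complex `T_S`: all `τ` with `τ ⊉ S`. -/
def pivotΩ {q : ℕ} (S : Finset (Fin q)) : Set (Finset (Fin q)) := {τ | ¬ S ⊆ τ}

/-- The subcomplex of the Taylor complex spanned by `{ε_τ : τ ∈ Ω}` is a resolution
of `Q/I`: it is exact in homological degrees `≥ 1`, and its zeroth homology is
identified with `Q/I` via the augmentation `ε_∅ ↦ 1`. -/
def IsResolutionOf (k : Type*) [Field k] (n q : ℕ) (D : Fin q → (Fin n →₀ ℕ))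
    (Ω : Set (Finset (Fin q))) : Prop :=
  (∀ i : ℕ, ∀ x ∈ piece k n q Ω (i + 1), taylorD k n q D x = 0 →
      ∃ y ∈ piece k n q Ω (i + 2), taylorD k n q D y = x) ∧
  (∀ x ∈ piece k n q Ω 0,
      (x (∅ : Finset (Fin q)) ∈ monIdeal k n q D ↔
        ∃ y ∈ piece k n q Ω 1, taylorD k n q D y = x))

/-- The Scarf set of `I`: all `t` such that there are two distinct subsets
`τ ≠ τ'` of `[q]` with `|τ| = t` and `m_τ = m_{τ'}`.  The Scarf number of `I`
is `sInf` of this set; `scarf(I) = ∞` corresponds to this set being empty. -/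
def scarfSet (k : Type*) [Field k] (n q : ℕ) (D : Fin q → (Fin n →₀ ℕ)) : Set ℕ :=
  {t | ∃ τ τ' : Finset (Fin q), τ ≠ τ' ∧ τ.card = t ∧
        lcmMono k n q D τ = lcmMono k n q D τ'}


/-- The index set `[l] = {1,…,l}`, realized as the first `l` elements of `Fin q`. -/
def Lset (q l : ℕ) : Finset (Fin q) :=
  Finset.univ.filter fun i => (i : ℕ) < l

/-- The pivot index `l+1`, realized as the element of `Fin q` with value `l`. -/
def pivElt (q l : ℕ) (hq : l < q) : Fin q := ⟨l, hq⟩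

/-- The unique element `t` of `[l] ∖ A` (when it exists). -/
def tOf (q l : ℕ) (hq : l < q) (A : Finset (Fin q)) : Fin q :=
  if h : (Lset q l \ A).Nonempty then (Lset q l \ A).min' h else pivElt q l hq

/-- The sum `Σ_{j ∈ J} sign(j,A) a_{sj} (m_j m_A / m_{A∪{j}}) ε_{A∪{j}}`,
where `c j = a_{sj}`. -/
def sigTerm (k : Type*) [Field k] (n q : ℕ) (D : Fin q → (Fin n →₀ ℕ))
    (c : Fin q → MvPolynomial (Fin n) k) (A J : Finset (Fin q)) : TotMod k n q :=
  ∑ j ∈ J, Finsupp.single (insert j A)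
    ((fsign {j} A : MvPolynomial (Fin n) k) * c j *
      monomial (D j + A.sup D - (insert j A).sup D) (1 : k))

/-- The correction term
`(−1)^{l+1} sign(t,A) a_{st} Σ_{i∈[l]} sign(i, A∪{t}∖{i})
  (m_t m_A / m_{A∪{t}∪{l+1}∖{i}}) ε_{A∪{t}∪{l+1}∖{i}}`. -/
def sigCorr (k : Type*) [Field k] (n q l : ℕ) (hq : l < q)
    (D : Fin q → (Fin n →₀ ℕ)) (c : Fin q → MvPolynomial (Fin n) k)
    (A : Finset (Fin q)) (t : Fin q) : TotMod k n q :=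
  ∑ i ∈ Lset q l, Finsupp.single ((insert (pivElt q l hq) (insert t A)) \ {i})
    ((-1 : MvPolynomial (Fin n) k) ^ (l + 1) *
      (fsign {t} A : MvPolynomial (Fin n) k) * c t *
      (fsign {i} (insert t A \ {i}) : MvPolynomial (Fin n) k) *
      monomial (D t + A.sup D - ((insert (pivElt q l hq) (insert t A)) \ {i}).sup D)
        (1 : k))

/-- The homotopy `σ_{e_s}` (for coefficients `c j = a_{sj}`), defined on basis
elements `ε_A` by the three-case formula of Theorem 5.1 of the paper. -/
def sigmaMap (k : Type*) [Field k] (n q l : ℕ) (hq : l < q)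
    (D : Fin q → (Fin n →₀ ℕ)) (c : Fin q → MvPolynomial (Fin n) k) :
    TotMod k n q →ₗ[MvPolynomial (Fin n) k] TotMod k n q :=
  Finsupp.linearCombination _ fun A =>
    if (A ∩ Lset q l).card ≠ l - 1 then
      sigTerm k n q D c A Aᶜ
    else if pivElt q l hq ∈ A then
      sigTerm k n q D c A (insert (tOf q l hq A) A)ᶜ
    else
      sigTerm k n q D c A (insert (tOf q l hq A) A)ᶜ +
        sigCorr k n q l hq D c A (tOf q l hq A)

/-- The element `a_s = Σ_{j=1}^q a_{sj} m_j`, for coefficients `c j = a_{sj}`. -/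
def aElt (k : Type*) [Field k] (n q : ℕ) (D : Fin q → (Fin n →₀ ℕ))
    (c : Fin q → MvPolynomial (Fin n) k) : MvPolynomial (Fin n) k :=
  ∑ j : Fin q, c j * monomial (D j) (1 : k)
end

namespace Htpy
open MvPolynomial Finset

noncomputable section
variable {k : Type*} [Field k] {n q : ℕ}

/-! ### Sign utilities -/

def cnt {q : ℕ} (j : Fin q) (S : Finset (Fin q)) : ℕ := (S.filter (· < j)).card

lemma fsign_eq {q : ℕ} (j : Fin q) (S : Finset (Fin q)) (h : j ∉ S) :
    fsign {j} S = (-1 : ℤ) ^ cnt j S := by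
  rw [fsign, if_pos (by simp [Finset.singleton_inter_of_notMem h])]
  congr 1
  rw [Finset.singleton_product, Finset.filter_map, Finset.card_map]
  rfl

lemma cnt_insert {q : ℕ} (j a : Fin q) (S : Finset (Fin q)) (h : a ∉ S) :
    cnt j (insert a S) = cnt j S + if a < j then 1 else 0 := by
  unfold cnt
  rw [Finset.filter_insert]
  split
  · rw [Finset.card_insert_of_notMem (by simp [h])]
  · simp

lemma insert_sdiff_sdiff {q : ℕ} (i j : Fin q) (S : Finset (Fin q)) (hi : i ∈ S) (hij : j ≠ i) :
    insert i ((S \ {j}) \ {i}) = S \ {j} := by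
  rw [Finset.sdiff_singleton_eq_erase i,
    Finset.insert_erase (Finset.mem_sdiff.2 ⟨hi, by simp [Ne.symm hij]⟩)]

lemma SL2 {q : ℕ} {i j : Fin q} {S : Finset (Fin q)} (hi : i ∈ S) (hj : j ∈ S) (hij : i ≠ j) :
    fsign {i} (S \ {i}) * fsign {j} ((S \ {i}) \ {j}) +
      fsign {j} (S \ {j}) * fsign {i} ((S \ {j}) \ {i}) = 0 := by
  have hcomm : (S \ {i}) \ {j} = (S \ {j}) \ {i} := sdiff_sdiff_comm
  have h2 : j ∉ (S \ {i}) \ {j} := by simp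
  have h4 : i ∉ (S \ {j}) \ {i} := by simp
  have h1 : i ∉ S \ {i} := by simp
  have h3 : j ∉ S \ {j} := by simp
  have c1 : cnt i (S \ {i}) = cnt i ((S \ {i}) \ {j}) + if j < i then 1 else 0 := by
    conv_lhs => rw [← insert_sdiff_sdiff j i S hj hij]
    rw [cnt_insert i j _ h2]
  have c2 : cnt j (S \ {j}) = cnt j ((S \ {j}) \ {i}) + if i < j then 1 else 0 := by
    conv_lhs => rw [← insert_sdiff_sdiff i j S hi hij.symm]
    rw [cnt_insert j i _ h4]
  rw [fsign_eq _ _ h1, fsign_eq _ _ h2, fsign_eq _ _ h3, fsign_eq _ _ h4, c1, c2, hcomm]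
  rcases hij.lt_or_gt with h | h
  · rw [if_neg (not_lt.2 h.le), if_pos h, add_zero, pow_add, pow_one]
    ring
  · rw [if_pos h, if_neg (not_lt.2 h.le), add_zero, pow_add, pow_one]
    ring

lemma SLdiag {q : ℕ} {j : Fin q} {S : Finset (Fin q)} (h : j ∉ S) :
    fsign {j} S * fsign {j} S = 1 := by
  rw [fsign_eq _ _ h, ← pow_add, ← two_mul, pow_mul]
  norm_num

/-- `fsign` is unchanged when inserting an element that is not smaller. -/
lemma fsign_insert_of_ge {q : ℕ} {j a : Fin q} {S : Finset (Fin q)} (hj : j ∉ S) (hja : j ≠ a)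
    (ha : a ∉ S) (hlt : ¬ a < j) :
    fsign {j} (insert a S) = fsign {j} S := by
  rw [fsign_eq _ _ (by simp [hja, hj]), fsign_eq _ _ hj, cnt_insert j a S ha, if_neg hlt,
    add_zero]

/-- `fsign` is negated when inserting a smaller element. -/
lemma fsign_insert_of_lt {q : ℕ} {j a : Fin q} {S : Finset (Fin q)} (hj : j ∉ S)
    (ha : a ∉ S) (hlt : a < j) :
    fsign {j} (insert a S) = - fsign {j} S := by
  rw [fsign_eq _ _ (by simp [hlt.ne', hj]), fsign_eq _ _ hj, cnt_insert j a S ha, if_pos hlt,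
    pow_add, pow_one, mul_neg_one]

/-! ### Exponent arithmetic in `Fin n →₀ ℕ` -/

lemma exp1 {n : ℕ} {u a b s : Fin n →₀ ℕ} (h1 : b ≤ a) (h2 : s ≤ u + b) :
    (a - b) + (u + b - s) = u + a - s := by
  have h3 : a - b + (u + b) = u + a := by
    rw [add_comm u b, ← add_assoc, tsub_add_cancel_of_le h1, add_comm]
  rw [← add_tsub_assoc_of_le h2, h3]

lemma sup_le_add {n : ℕ} (u v : Fin n →₀ ℕ) : u ⊔ v ≤ u + v :=
  sup_le (le_add_right le_rfl) (le_add_left le_rfl)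

/-! ### The `tm` normal form for terms -/

/-- Normal form for the terms appearing in all computations:
`tm S z p e = single S (z * p * x^e)`. -/
def tm (S : Finset (Fin q)) (z : ℤ) (p : MvPolynomial (Fin n) k)
    (e : Fin n →₀ ℕ) : TotMod k n q :=
  Finsupp.single S ((z : MvPolynomial (Fin n) k) * p * monomial e 1)

lemma monmul (e1 e2 : Fin n →₀ ℕ) :
    (monomial e1 (1 : k)) * monomial e2 1 = monomial (e1 + e2) 1 := by
  rw [monomial_mul, one_mul]

lemma coefmul (z z' : ℤ) (p p' : MvPolynomial (Fin n) k) (e e' : Fin n →₀ ℕ) :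
    ((z : MvPolynomial (Fin n) k) * p * monomial e 1) * ((z' : MvPolynomial (Fin n) k) * p' * monomial e' 1)
      = ((z * z' : ℤ) : MvPolynomial (Fin n) k) * (p * p') * monomial (e + e') 1 := by
  calc ((z : MvPolynomial (Fin n) k) * p * monomial e 1) * ((z' : MvPolynomial (Fin n) k) * p' * monomial e' 1)
      = ((z : MvPolynomial (Fin n) k) * (z' : MvPolynomial (Fin n) k)) * (p * p') *
        ((monomial e 1) * (monomial e' 1)) := by ring
    _ = _ := by rw [monmul]; push_cast; ring

lemma smul_tm (z z' : ℤ) (p p' : MvPolynomial (Fin n) k) (e e' : Fin n →₀ ℕ)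
    (S : Finset (Fin q)) :
    ((z : MvPolynomial (Fin n) k) * p * monomial e 1) • tm S z' p' e'
      = tm S (z * z') (p * p') (e + e') := by
  unfold tm
  rw [Finsupp.smul_single, smul_eq_mul, coefmul]

lemma tm_add_zero {S : Finset (Fin q)} {z1 z2 : ℤ} (p : MvPolynomial (Fin n) k)
    (e : Fin n →₀ ℕ) (h : z1 + z2 = 0) : tm S z1 p e + tm S z2 p e = 0 := by
  unfold tm
  rw [← Finsupp.single_add, ← add_mul, ← add_mul, ← Int.cast_add, h]
  simp

lemma tm_congr {S1 S2 : Finset (Fin q)} {z1 z2 : ℤ} {p : MvPolynomial (Fin n) k}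
    {e1 e2 : Fin n →₀ ℕ} (hS : S1 = S2) (hz : z1 = z2) (he : e1 = e2) :
    tm S1 z1 p e1 = tm S2 z2 p e2 := by rw [hS, hz, he]

lemma tm_one (S : Finset (Fin q)) : tm S 1 (1 : MvPolynomial (Fin n) k) 0 = Finsupp.single S 1 := by
  unfold tm
  simp

end
end Htpy
namespace Htpy
open MvPolynomial Finset

noncomputable section
variable {k : Type*} [Field k] {n q : ℕ}

/-! ### Evaluation of the maps on `tm` terms -/

lemma linearCombination_single' {ι M : Type*} [AddCommGroup M]
    [Module (MvPolynomial (Fin n) k) M] [DecidableEq ι]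
    (f : ι → M) (a : ι) (b : MvPolynomial (Fin n) k) :
    Finsupp.linearCombination (MvPolynomial (Fin n) k) f (Finsupp.single a b) = b • f a := by
  simp [Finsupp.linearCombination_single]

lemma taylorD_single (D : Fin q → (Fin n →₀ ℕ)) (τ : Finset (Fin q))
    (p : MvPolynomial (Fin n) k) :
    taylorD k n q D (Finsupp.single τ p) =
      ∑ j ∈ τ, Finsupp.single (τ \ {j})
        (p * ((fsign {j} (τ \ {j}) : MvPolynomial (Fin n) k) *
          monomial (τ.sup D - (τ \ {j}).sup D) (1 : k))) := by
  rw [taylorD, linearCombination_single', Finset.smul_sum]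
  refine Finset.sum_congr rfl fun j hj => ?_
  rw [Finsupp.smul_single, smul_eq_mul]

lemma taylorD_tm (D : Fin q → (Fin n →₀ ℕ)) (S : Finset (Fin q)) (z : ℤ)
    (p : MvPolynomial (Fin n) k) (e : Fin n →₀ ℕ) :
    taylorD k n q D (tm S z p e) =
      ∑ j ∈ S, tm (S \ {j}) (z * fsign {j} (S \ {j})) p
        (e + (S.sup D - (S \ {j}).sup D)) := by
  rw [tm, taylorD_single]
  refine Finset.sum_congr rfl fun j hj => ?_
  unfold tm
  congr 1
  calc (z : MvPolynomial (Fin n) k) * p * monomial e 1 *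
        ((fsign {j} (S \ {j}) : MvPolynomial (Fin n) k) * monomial (S.sup D - (S \ {j}).sup D) 1)
      = ((z : MvPolynomial (Fin n) k) * p * monomial e 1) *
        ((fsign {j} (S \ {j}) : MvPolynomial (Fin n) k) * 1 * monomial (S.sup D - (S \ {j}).sup D) 1) := by
        ring
    _ = _ := by rw [coefmul, mul_one]

lemma sigTerm_eq (D : Fin q → (Fin n →₀ ℕ)) (c : Fin q → MvPolynomial (Fin n) k)
    (A J : Finset (Fin q)) :
    sigTerm k n q D c A J =
      ∑ j ∈ J, tm (insert j A) (fsign {j} A) (c j)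
        (D j + A.sup D - (insert j A).sup D) := rfl

lemma sigCorr_eq {l : ℕ} (hq : l < q) (D : Fin q → (Fin n →₀ ℕ))
    (c : Fin q → MvPolynomial (Fin n) k) (A : Finset (Fin q)) (t : Fin q) :
    sigCorr k n q l hq D c A t =
      ∑ i ∈ Lset q l, tm ((insert (pivElt q l hq) (insert t A)) \ {i})
        ((-1) ^ (l + 1) * fsign {t} A * fsign {i} ((insert t A) \ {i})) (c t)
        (D t + A.sup D - ((insert (pivElt q l hq) (insert t A)) \ {i}).sup D) := by
  refine Finset.sum_congr rfl fun i hi => ?_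
  unfold tm
  congr 1
  push_cast
  ring

/-- The full (untruncated) Taylor homotopy. -/
def sigF (D : Fin q → (Fin n →₀ ℕ)) (c : Fin q → MvPolynomial (Fin n) k) :
    TotMod k n q →ₗ[MvPolynomial (Fin n) k] TotMod k n q :=
  Finsupp.linearCombination _ fun A => sigTerm k n q D c A Aᶜ

lemma sigF_single (D : Fin q → (Fin n →₀ ℕ)) (c : Fin q → MvPolynomial (Fin n) k)
    (B : Finset (Fin q)) (v : MvPolynomial (Fin n) k) :
    sigF D c (Finsupp.single B v) = v • sigTerm k n q D c B Bᶜ := by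
  rw [sigF, linearCombination_single']

lemma sigF_tm (D : Fin q → (Fin n →₀ ℕ)) (c : Fin q → MvPolynomial (Fin n) k)
    (B : Finset (Fin q)) (z : ℤ) (p : MvPolynomial (Fin n) k) (e : Fin n →₀ ℕ) :
    sigF D c (tm B z p e) =
      ∑ j ∈ Bᶜ, tm (insert j B) (z * fsign {j} B) (p * c j)
        (e + (D j + B.sup D - (insert j B).sup D)) := by
  rw [tm, sigF_single, sigTerm_eq, Finset.smul_sum]
  refine Finset.sum_congr rfl fun j hj => ?_
  rw [smul_tm]

lemma sigmaMap_single {l : ℕ} (hq : l < q) (D : Fin q → (Fin n →₀ ℕ))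
    (c : Fin q → MvPolynomial (Fin n) k) (B : Finset (Fin q)) (v : MvPolynomial (Fin n) k) :
    sigmaMap k n q l hq D c (Finsupp.single B v) =
      v • (if (B ∩ Lset q l).card ≠ l - 1 then
        sigTerm k n q D c B Bᶜ
      else if pivElt q l hq ∈ B then
        sigTerm k n q D c B (insert (tOf q l hq B) B)ᶜ
      else
        sigTerm k n q D c B (insert (tOf q l hq B) B)ᶜ +
          sigCorr k n q l hq D c B (tOf q l hq B)) := by
  rw [sigmaMap, linearCombination_single']

/-! ### `Lset`, `pivElt`, `tOf` facts -/

lemma mem_Lset {l : ℕ} {x : Fin q} : x ∈ Lset q l ↔ (x : ℕ) < l := by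
  simp [Lset]

lemma card_Lset {l : ℕ} (hq : l < q) : (Lset q l).card = l := by
  have : Lset q l = (Finset.univ : Finset (Fin l)).map
      ⟨fun i => Fin.castLE hq.le i, fun a b hab => by
        simpa [Fin.ext_iff, Fin.castLE] using hab⟩ := by
    ext x
    simp only [mem_Lset, Finset.mem_map, Finset.mem_univ, true_and,
      Function.Embedding.coeFn_mk]
    constructor
    · rintro hx
      exact ⟨⟨(x : ℕ), hx⟩, by simp [Fin.ext_iff, Fin.castLE]⟩
    · rintro ⟨y, rfl⟩
      simpa [Fin.castLE] using y.isLt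
  rw [this, Finset.card_map, Finset.card_univ, Fintype.card_fin]

lemma piv_notMem_Lset {l : ℕ} (hq : l < q) : pivElt q l hq ∉ Lset q l := by
  simp [mem_Lset, pivElt]

lemma lt_piv_iff {l : ℕ} (hq : l < q) {x : Fin q} : x < pivElt q l hq ↔ x ∈ Lset q l := by
  simp [mem_Lset, pivElt, Fin.lt_def]

lemma tOf_eq {l : ℕ} (hq : l < q) {B : Finset (Fin q)} {t : Fin q}
    (h : Lset q l \ B = {t}) : tOf q l hq B = t := by
  unfold tOf
  rw [dif_pos (by rw [h]; exact ⟨t, Finset.mem_singleton_self t⟩)]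
  simp [h]

lemma Lset_sdiff_eq {l : ℕ} (hq : l < q) {B : Finset (Fin q)}
    (hcard : (B ∩ Lset q l).card = l - 1) (hl : 1 ≤ l) :
    Lset q l \ B = {tOf q l hq B} := by
  have h1 : (Lset q l \ B).card = 1 := by
    have := Finset.card_inter_add_card_sdiff (Lset q l) B
    rw [Finset.inter_comm] at this
    rw [card_Lset hq] at this
    omega
  obtain ⟨a, ha⟩ := Finset.card_eq_one.1 h1
  rw [ha, tOf_eq hq ha]

end
end Htpy
namespace Htpy
open MvPolynomial Finset
set_option maxHeartbeats 1000000

noncomputable section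
variable {k : Type*} [Field k] {n q : ℕ}

/-! ### Set helpers -/

lemma erase_insert' {q : ℕ} {j : Fin q} {A : Finset (Fin q)} (hj : j ∉ A) :
    (insert j A) \ {j} = A := by
  rw [Finset.sdiff_singleton_eq_erase, Finset.erase_insert hj]

lemma insert_sdiff_self' {q : ℕ} {i : Fin q} {A : Finset (Fin q)} (hi : i ∈ A) :
    insert i (A \ {i}) = A := by
  rw [Finset.sdiff_singleton_eq_erase, Finset.insert_erase hi]

lemma compl_sdiff_singleton {q : ℕ} (A : Finset (Fin q)) (i : Fin q) :
    (A \ {i})ᶜ = insert i Aᶜ := by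
  rw [Finset.sdiff_singleton_eq_erase, Finset.compl_erase]

lemma insert_sdiff_of_ne {q : ℕ} {i j : Fin q} (A : Finset (Fin q)) (hij : j ≠ i) :
    (insert j A) \ {i} = insert j (A \ {i}) :=
  Finset.insert_sdiff_of_notMem A (by simp [hij])

/-- The basic transposition sign identity, in the `insert`/`sdiff` form in which
it appears for the cross terms. -/
lemma SL1 {q : ℕ} {i j : Fin q} {A : Finset (Fin q)} (hj : j ∉ A) (hi : i ∈ A) :
    fsign {j} A * fsign {i} ((insert j A) \ {i}) +
      fsign {i} (A \ {i}) * fsign {j} (A \ {i}) = 0 := by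
  have hji : j ≠ i := fun h => hj (h ▸ hi)
  have e1 : (insert j A) \ {i} = insert j (A \ {i}) := insert_sdiff_of_ne A hji
  have hiAi : i ∉ A \ {i} := by simp
  have hjAi : j ∉ A \ {i} := by simp [hj]
  have hins : A = insert i (A \ {i}) := (insert_sdiff_self' hi).symm
  have hc1 : cnt j A = cnt j (A \ {i}) + if i < j then 1 else 0 := by
    conv_lhs => rw [hins]
    rw [cnt_insert j i _ hiAi]
  rw [e1, fsign_eq j A hj, fsign_eq i (insert j (A \ {i})) (by simp [hiAi, Ne.symm hji]),
    fsign_eq i (A \ {i}) hiAi, fsign_eq j (A \ {i}) hjAi, hc1,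
    cnt_insert i j _ hjAi]
  rcases hji.lt_or_gt with h | h
  · rw [if_neg (not_lt.2 h.le), if_pos h, add_zero, pow_add, pow_one]
    ring
  · rw [if_pos h, if_neg (not_lt.2 h.le), add_zero, pow_add, pow_one]
    ring

variable (D : Fin q → (Fin n →₀ ℕ)) (c : Fin q → MvPolynomial (Fin n) k)

/-! ### sup facts -/

lemma sup_insert_le_add (j : Fin q) (A : Finset (Fin q)) :
    (insert j A).sup D ≤ D j + A.sup D := by
  rw [Finset.sup_insert]
  exact le_trans (sup_le_add _ _) le_rfl

/-! ### Cross-term cancellation -/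

lemma cross (A : Finset (Fin q)) (j i : Fin q) (hj : j ∉ A) (hi : i ∈ A) :
    tm ((insert j A) \ {i}) (fsign {j} A * fsign {i} ((insert j A) \ {i})) (c j)
      ((D j + A.sup D - (insert j A).sup D) +
        ((insert j A).sup D - ((insert j A) \ {i}).sup D)) +
    tm (insert j (A \ {i})) (fsign {i} (A \ {i}) * fsign {j} (A \ {i})) (1 * c j)
      ((A.sup D - (A \ {i}).sup D) +
        (D j + (A \ {i}).sup D - (insert j (A \ {i})).sup D)) = 0 := by
  have hji : j ≠ i := fun h => hj (h ▸ hi)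
  have e1 : (insert j A) \ {i} = insert j (A \ {i}) := insert_sdiff_of_ne A hji
  rw [one_mul]
  rw [show ((D j + A.sup D - (insert j A).sup D) +
        ((insert j A).sup D - ((insert j A) \ {i}).sup D)) =
      D j + A.sup D - ((insert j A) \ {i}).sup D from
    tsub_add_tsub_cancel (sup_insert_le_add D j A)
      (Finset.sup_mono (Finset.sdiff_subset))]
  rw [show ((A.sup D - (A \ {i}).sup D) +
        (D j + (A \ {i}).sup D - (insert j (A \ {i})).sup D)) =
      D j + A.sup D - (insert j (A \ {i})).sup D from
    exp1 (Finset.sup_mono (Finset.sdiff_subset)) (sup_insert_le_add D j (A \ {i}))]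
  rw [e1]
  have hsl := SL1 hj hi
  rw [e1] at hsl
  exact tm_add_zero (c j) _ hsl

/-! ### Diagonal terms -/

lemma diag1 (A : Finset (Fin q)) (j : Fin q) (hj : j ∉ A) :
    tm ((insert j A) \ {j}) (fsign {j} A * fsign {j} ((insert j A) \ {j})) (c j)
      ((D j + A.sup D - (insert j A).sup D) +
        ((insert j A).sup D - ((insert j A) \ {j}).sup D)) = tm A 1 (c j) (D j) := by
  rw [erase_insert' hj]
  refine tm_congr rfl (SLdiag hj) ?_
  rw [tsub_add_tsub_cancel (sup_insert_le_add D j A)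
    (Finset.sup_mono (Finset.subset_insert j A)), add_tsub_cancel_right]

lemma diag2 (A : Finset (Fin q)) (i : Fin q) (hi : i ∈ A) :
    tm (insert i (A \ {i})) (fsign {i} (A \ {i}) * fsign {i} (A \ {i})) (1 * c i)
      ((A.sup D - (A \ {i}).sup D) +
        (D i + (A \ {i}).sup D - (insert i (A \ {i})).sup D)) = tm A 1 (c i) (D i) := by
  rw [one_mul, insert_sdiff_self' hi]
  refine tm_congr rfl (SLdiag (by simp)) ?_
  rw [exp1 (Finset.sup_mono (Finset.sdiff_subset)) ?hs, add_tsub_cancel_right]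
  case hs =>
    conv_lhs => rw [← insert_sdiff_self' hi]
    exact sup_insert_le_add D i (A \ {i})

/-! ### The classical homotopy identity for the full Taylor complex -/

lemma full (A : Finset (Fin q)) :
    taylorD k n q D (sigF D c (Finsupp.single A 1)) +
      sigF D c (taylorD k n q D (Finsupp.single A 1)) =
    aElt k n q D c • Finsupp.single A 1 := by
  have e1 : taylorD k n q D (sigF D c (Finsupp.single A 1)) =
      ∑ j ∈ Aᶜ, (tm A 1 (c j) (D j) +
        ∑ i ∈ A, tm ((insert j A) \ {i}) (fsign {j} A * fsign {i} ((insert j A) \ {i})) (c j)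
          ((D j + A.sup D - (insert j A).sup D) +
            ((insert j A).sup D - ((insert j A) \ {i}).sup D))) := by
    rw [sigF_single, one_smul, sigTerm_eq, map_sum]
    refine Finset.sum_congr rfl fun j hj => ?_
    have hjA : j ∉ A := by simpa using hj
    rw [taylorD_tm, Finset.sum_insert hjA, diag1 D c A j hjA]
  have e2 : sigF D c (taylorD k n q D (Finsupp.single A 1)) =
      ∑ i ∈ A, (tm A 1 (c i) (D i) +
        ∑ j ∈ Aᶜ, tm (insert j (A \ {i})) (fsign {i} (A \ {i}) * fsign {j} (A \ {i})) (1 * c j)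
          ((A.sup D - (A \ {i}).sup D) +
            (D j + (A \ {i}).sup D - (insert j (A \ {i})).sup D))) := by
    rw [← tm_one, taylorD_tm, map_sum]
    refine Finset.sum_congr rfl fun i hi => ?_
    rw [one_mul, zero_add, sigF_tm, compl_sdiff_singleton, Finset.sum_insert (by simp [hi]),
      diag2 D c A i hi]
  rw [e1, e2, Finset.sum_add_distrib, Finset.sum_add_distrib]
  have hcross : (∑ j ∈ Aᶜ, ∑ i ∈ A, tm ((insert j A) \ {i})
        (fsign {j} A * fsign {i} ((insert j A) \ {i})) (c j)
        ((D j + A.sup D - (insert j A).sup D) +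
          ((insert j A).sup D - ((insert j A) \ {i}).sup D))) +
      (∑ i ∈ A, ∑ j ∈ Aᶜ, tm (insert j (A \ {i}))
        (fsign {i} (A \ {i}) * fsign {j} (A \ {i})) (1 * c j)
        ((A.sup D - (A \ {i}).sup D) +
          (D j + (A \ {i}).sup D - (insert j (A \ {i})).sup D))) = 0 := by
    rw [Finset.sum_comm (s := A)]
    rw [← Finset.sum_add_distrib]
    refine Finset.sum_eq_zero fun j hj => ?_
    rw [← Finset.sum_add_distrib]
    exact Finset.sum_eq_zero fun i hi => cross D c A j i (by simpa using hj) hi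
  have hdiag : (∑ j ∈ Aᶜ, tm A 1 (c j) (D j)) + (∑ i ∈ A, tm A 1 (c i) (D i)) =
      aElt k n q D c • Finsupp.single A 1 := by
    rw [add_comm, Finset.sum_add_sum_compl A (fun j => tm A 1 (c j) (D j))]
    rw [Finsupp.smul_single, smul_eq_mul, mul_one, aElt, Finsupp.single_finset_sum]
    refine Finset.sum_congr rfl fun j _ => ?_
    unfold tm
    rw [Int.cast_one, one_mul]
  calc (∑ j ∈ Aᶜ, tm A 1 (c j) (D j)) +
        (∑ j ∈ Aᶜ, ∑ i ∈ A, tm ((insert j A) \ {i})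
          (fsign {j} A * fsign {i} ((insert j A) \ {i})) (c j)
          ((D j + A.sup D - (insert j A).sup D) +
            ((insert j A).sup D - ((insert j A) \ {i}).sup D))) +
        ((∑ i ∈ A, tm A 1 (c i) (D i)) +
        (∑ i ∈ A, ∑ j ∈ Aᶜ, tm (insert j (A \ {i}))
          (fsign {i} (A \ {i}) * fsign {j} (A \ {i})) (1 * c j)
          ((A.sup D - (A \ {i}).sup D) +
            (D j + (A \ {i}).sup D - (insert j (A \ {i})).sup D))))
      = ((∑ j ∈ Aᶜ, tm A 1 (c j) (D j)) + (∑ i ∈ A, tm A 1 (c i) (D i))) +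
        ((∑ j ∈ Aᶜ, ∑ i ∈ A, tm ((insert j A) \ {i})
          (fsign {j} A * fsign {i} ((insert j A) \ {i})) (c j)
          ((D j + A.sup D - (insert j A).sup D) +
            ((insert j A).sup D - ((insert j A) \ {i}).sup D))) +
        (∑ i ∈ A, ∑ j ∈ Aᶜ, tm (insert j (A \ {i}))
          (fsign {i} (A \ {i}) * fsign {j} (A \ {i})) (1 * c j)
          ((A.sup D - (A \ {i}).sup D) +
            (D j + (A \ {i}).sup D - (insert j (A \ {i})).sup D)))) := by abel
    _ = aElt k n q D c • Finsupp.single A 1 := by rw [hcross, hdiag, add_zero]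

end
end Htpy
namespace Htpy
open MvPolynomial Finset

noncomputable section
set_option maxHeartbeats 1000000
variable {k : Type*} [Field k] {n q l : ℕ}

/-- The difference between the pivot homotopy and the full homotopy, on a basis
element. -/
def delta (hq : l < q) (D : Fin q → (Fin n →₀ ℕ)) (c : Fin q → MvPolynomial (Fin n) k)
    (B : Finset (Fin q)) : TotMod k n q :=
  sigmaMap k n q l hq D c (Finsupp.single B 1) - sigF D c (Finsupp.single B 1)

variable (hq : l < q) (D : Fin q → (Fin n →₀ ℕ)) (c : Fin q → MvPolynomial (Fin n) k)

lemma sigma_sub_sigF (B : Finset (Fin q)) (v : MvPolynomial (Fin n) k) :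
    sigmaMap k n q l hq D c (Finsupp.single B v) - sigF D c (Finsupp.single B v) =
      v • delta hq D c B := by
  unfold delta
  rw [sigmaMap_single, sigF_single, sigmaMap_single, sigF_single, smul_sub, one_smul, one_smul]

lemma delta_zero {B : Finset (Fin q)} (hB : (B ∩ Lset q l).card ≠ l - 1) :
    delta hq D c B = 0 := by
  unfold delta
  rw [sigmaMap_single, sigF_single, one_smul, one_smul, if_pos hB, sub_self]

lemma delta_two {B : Finset (Fin q)} (hB : (B ∩ Lset q l).card = l - 1)
    (ht : Lset q l \ B = {tOf q l hq B}) (hpiv : pivElt q l hq ∈ B) :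
    delta hq D c B =
      - tm (insert (tOf q l hq B) B) (fsign {tOf q l hq B} B) (c (tOf q l hq B))
        (D (tOf q l hq B) + B.sup D - (insert (tOf q l hq B) B).sup D) := by
  have htB : tOf q l hq B ∉ B := by
    have : tOf q l hq B ∈ Lset q l \ B := ht ▸ Finset.mem_singleton_self _
    exact (Finset.mem_sdiff.1 this).2
  unfold delta
  rw [sigmaMap_single, sigF_single, one_smul, one_smul, if_neg (not_not.2 hB), if_pos hpiv]
  have hBc : Bᶜ = insert (tOf q l hq B) ((insert (tOf q l hq B) B)ᶜ) := by
    rw [Finset.compl_insert, Finset.insert_erase (Finset.mem_compl.2 htB)]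
  rw [sigTerm_eq, sigTerm_eq, hBc,
    Finset.sum_insert (by simp : tOf q l hq B ∉ (insert (tOf q l hq B) B)ᶜ)]
  unfold tm
  abel

lemma delta_three {B : Finset (Fin q)} (hB : (B ∩ Lset q l).card = l - 1)
    (ht : Lset q l \ B = {tOf q l hq B}) (hpiv : pivElt q l hq ∉ B) :
    delta hq D c B =
      - tm (insert (tOf q l hq B) B) (fsign {tOf q l hq B} B) (c (tOf q l hq B))
        (D (tOf q l hq B) + B.sup D - (insert (tOf q l hq B) B).sup D)
      + sigCorr k n q l hq D c B (tOf q l hq B) := by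
  have htB : tOf q l hq B ∉ B := by
    have : tOf q l hq B ∈ Lset q l \ B := ht ▸ Finset.mem_singleton_self _
    exact (Finset.mem_sdiff.1 this).2
  unfold delta
  rw [sigmaMap_single, sigF_single, one_smul, one_smul, if_neg (not_not.2 hB),
    if_neg hpiv]
  have hBc : Bᶜ = insert (tOf q l hq B) ((insert (tOf q l hq B) B)ᶜ) := by
    rw [Finset.compl_insert, Finset.insert_erase (Finset.mem_compl.2 htB)]
  rw [sigTerm_eq, sigTerm_eq, hBc,
    Finset.sum_insert (by simp : tOf q l hq B ∉ (insert (tOf q l hq B) B)ᶜ)]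
  unfold tm
  abel

end
end Htpy
namespace Htpy
open MvPolynomial Finset

noncomputable section
set_option maxHeartbeats 1600000
variable {k : Type*} [Field k] {n q l : ℕ}

lemma not_piv_lt (hq : l < q) {x : Fin q} (hx : x ∈ Lset q l) : ¬ pivElt q l hq < x := by
  have := mem_Lset.1 hx
  simp only [Fin.lt_def, pivElt, not_lt]
  omega

lemma piv_lt_of (hq : l < q) {x : Fin q} (hx : x ∉ Lset q l) (hxp : x ≠ pivElt q l hq) :
    pivElt q l hq < x := by
  rw [mem_Lset, not_lt] at hx
  have : (x : ℕ) ≠ l := fun h => hxp (by simp [pivElt, Fin.ext_iff, h])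
  simp only [Fin.lt_def, pivElt]
  omega

lemma ne_piv_of_mem_Lset (hq : l < q) {x : Fin q} (hx : x ∈ Lset q l) :
    x ≠ pivElt q l hq :=
  fun h => piv_notMem_Lset hq (h ▸ hx)

lemma powkey (hl : 2 ≤ l) : (-1 : ℤ)^(l-1) * (-1)^(l+1) = 1 := by
  rw [← pow_add, show l-1+(l+1) = 2*l by omega, pow_mul]
  norm_num

section Context
variable (hq : l < q) (D : Fin q → (Fin n →₀ ℕ)) (c : Fin q → MvPolynomial (Fin n) k)
variable {A : Finset (Fin q)} {t : Fin q}

/-- master sup bound: `dsup L ≤ D t ⊔ sup (A \ {j})` for `j ∉ L`. -/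
lemma Lsup_le (htL : t ∈ Lset q l) (hLsub : Lset q l ⊆ insert t A)
    {j : Fin q} (hj : j ∉ Lset q l) :
    (Lset q l).sup D ≤ D t ⊔ (A \ {j}).sup D := by
  refine Finset.sup_le fun x hx => ?_
  by_cases hxt : x = t
  · subst hxt; exact le_sup_left
  · have hxA : x ∈ A := by
      rcases Finset.mem_insert.1 (hLsub hx) with h | h
      · exact absurd h hxt
      · exact h
    have hxj : x ≠ j := fun h => hj (h ▸ hx)
    exact le_trans (Finset.le_sup (Finset.mem_sdiff.2 ⟨hxA, by simp [hxj]⟩)) le_sup_right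

lemma fsign_piv_sdiff (hcard : (A ∩ Lset q l).card = l - 1)
    (hpiv : pivElt q l hq ∈ A) :
    fsign {pivElt q l hq} (A \ {pivElt q l hq}) = (-1 : ℤ)^(l-1) := by
  rw [fsign_eq _ _ (by simp)]
  congr 1
  show cnt (pivElt q l hq) (A \ {pivElt q l hq}) = l - 1
  unfold cnt
  have he : (A \ {pivElt q l hq}).filter (· < pivElt q l hq) = A ∩ Lset q l := by
    ext x
    simp only [Finset.mem_filter, Finset.mem_sdiff, Finset.mem_inter,
      Finset.mem_singleton, lt_piv_iff hq]
    constructor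
    · rintro ⟨⟨h1, _⟩, h3⟩; exact ⟨h1, h3⟩
    · rintro ⟨h1, h2⟩; exact ⟨⟨h1, ne_piv_of_mem_Lset hq h2⟩, h2⟩
  rw [he, hcard]

/-- **Sub-case (ii) claim**: the scaled correction term attached to `A \ {piv}`
equals the sum over `L` of the Taylor expansion terms of the omitted `t`-term. -/
lemma claim2 (hl : 2 ≤ l) (hgap : D (pivElt q l hq) ≤ (Lset q l).sup D)
    (htL : t ∈ Lset q l) (htA : t ∉ A) (hLsub : Lset q l ⊆ insert t A)
    (hcard : (A ∩ Lset q l).card = l - 1) (hpiv : pivElt q l hq ∈ A) :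
    ((fsign {pivElt q l hq} (A \ {pivElt q l hq}) : MvPolynomial (Fin n) k) * 1 *
      monomial (A.sup D - (A \ {pivElt q l hq}).sup D) 1) •
        sigCorr k n q l hq D c (A \ {pivElt q l hq}) t
    = ∑ i ∈ Lset q l, tm ((insert t A) \ {i})
        (fsign {t} A * fsign {i} ((insert t A) \ {i})) (c t)
        ((D t + A.sup D - (insert t A).sup D) +
          ((insert t A).sup D - ((insert t A) \ {i}).sup D)) := by
  rw [sigCorr_eq, Finset.smul_sum]
  refine Finset.sum_congr rfl fun i hi => ?_
  rw [smul_tm]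
  have hpivL : pivElt q l hq ∉ Lset q l := piv_notMem_Lset hq
  have hipiv : i ≠ pivElt q l hq := ne_piv_of_mem_Lset hq hi
  have htpiv : t ≠ pivElt q l hq := ne_piv_of_mem_Lset hq htL
  have hBB : insert (pivElt q l hq) (insert t (A \ {pivElt q l hq})) = insert t A := by
    rw [Finset.insert_comm, insert_sdiff_self' hpiv]
  rw [one_mul, hBB]
  -- sign rewrites
  have hfs1 : fsign {t} (A \ {pivElt q l hq}) = fsign {t} A := by
    have h1 := fsign_insert_of_ge (j := t) (a := pivElt q l hq) (S := A \ {pivElt q l hq})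
      (by simp [htA]) htpiv (by simp) (not_piv_lt hq htL)
    rw [insert_sdiff_self' hpiv] at h1
    exact h1.symm
  have hset2 : (insert t A) \ {i} =
      insert (pivElt q l hq) ((insert t (A \ {pivElt q l hq})) \ {i}) := by
    conv_lhs => rw [← hBB]
    exact insert_sdiff_of_ne _ (Ne.symm hipiv)
  have hfs2 : fsign {i} ((insert t (A \ {pivElt q l hq})) \ {i}) =
      fsign {i} ((insert t A) \ {i}) := by
    rw [hset2]
    exact (fsign_insert_of_ge (by simp) hipiv
      (by simp [htpiv.symm, Finset.mem_sdiff]) (not_piv_lt hq hi)).symm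
  rw [hfs1, hfs2, fsign_piv_sdiff hq hcard hpiv]
  refine tm_congr rfl ?_ ?_
  · linear_combination (fsign {t} A * fsign {i} ((insert t A) \ {i})) * powkey hl
  · have hb : (A \ {pivElt q l hq}).sup D ≤ A.sup D := Finset.sup_mono Finset.sdiff_subset
    have hs : ((insert t A) \ {i}).sup D ≤ D t + (A \ {pivElt q l hq}).sup D := by
      refine le_trans (Finset.sup_mono Finset.sdiff_subset) ?_
      rw [Finset.sup_insert]
      refine sup_le (le_add_right le_rfl) ?_
      conv_lhs => rw [← insert_sdiff_self' hpiv]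
      rw [Finset.sup_insert]
      refine sup_le (le_trans hgap ?_) ?_
      · exact le_trans (Lsup_le D htL hLsub hpivL) (sup_le_add _ _)
      · exact le_add_left le_rfl
    rw [exp1 hb hs, tsub_add_tsub_cancel (sup_insert_le_add D t A)
      (Finset.sup_mono Finset.sdiff_subset)]

end Context
end
end Htpy
namespace Htpy
open MvPolynomial Finset

noncomputable section
set_option maxHeartbeats 1600000
variable {k : Type*} [Field k] {n q l : ℕ}

section Context3
variable (hq : l < q) (D : Fin q → (Fin n →₀ ℕ)) (c : Fin q → MvPolynomial (Fin n) k)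
variable {A : Finset (Fin q)} {t : Fin q}

lemma filter_insert_L (htL : t ∈ Lset q l) (hLsub : Lset q l ⊆ insert t A) :
    (insert t A).filter (· ∈ Lset q l) = Lset q l := by
  ext x
  simp only [Finset.mem_filter]
  exact ⟨fun h => h.2, fun h => ⟨hLsub h, h⟩⟩

lemma filter_insert_notL (htL : t ∈ Lset q l) :
    (insert t A).filter (fun x => x ∉ Lset q l) = A.filter (fun x => x ∉ Lset q l) := by
  ext x
  simp only [Finset.mem_filter, Finset.mem_insert]
  constructor
  · rintro ⟨h1 | h1, h2⟩
    · exact absurd (h1 ▸ htL) h2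
    · exact ⟨h1, h2⟩
  · rintro ⟨h1, h2⟩; exact ⟨Or.inr h1, h2⟩

lemma filter_sdiff_L (htL : t ∈ Lset q l) (hLsub : Lset q l ⊆ insert t A)
    {i : Fin q} (hi : i ∈ Lset q l) :
    ((insert t A) \ {i}).filter (· ∈ Lset q l) = Lset q l \ {i} := by
  ext x
  simp only [Finset.mem_filter, Finset.mem_sdiff, Finset.mem_singleton]
  constructor
  · rintro ⟨⟨h1, h2⟩, h3⟩; exact ⟨h3, h2⟩
  · rintro ⟨h1, h2⟩; exact ⟨⟨hLsub h1, h2⟩, h1⟩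

lemma filter_sdiff_notL (htL : t ∈ Lset q l) {i : Fin q} (hi : i ∈ Lset q l) :
    ((insert t A) \ {i}).filter (fun x => x ∉ Lset q l) = A.filter (fun x => x ∉ Lset q l) := by
  ext x
  simp only [Finset.mem_filter, Finset.mem_sdiff, Finset.mem_singleton, Finset.mem_insert]
  constructor
  · rintro ⟨⟨h1 | h1, h2⟩, h3⟩
    · exact absurd (h1 ▸ htL) h3
    · exact ⟨h1, h3⟩
  · rintro ⟨h1, h2⟩
    exact ⟨⟨Or.inr h1, fun h => h2 (h ▸ hi)⟩, h2⟩

lemma fsign_piv_T0 (htL : t ∈ Lset q l) (hLsub : Lset q l ⊆ insert t A)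
    (hpiv : pivElt q l hq ∉ A) {i : Fin q} (hi : i ∈ Lset q l) :
    fsign {pivElt q l hq} ((insert t A) \ {i}) = (-1 : ℤ)^(l-1) := by
  have hpT0 : pivElt q l hq ∉ (insert t A) \ {i} := by
    simp only [Finset.mem_sdiff, Finset.mem_insert, not_and_or]
    left
    push_neg
    exact ⟨(ne_piv_of_mem_Lset hq htL).symm, hpiv⟩
  rw [fsign_eq _ _ hpT0]
  congr 1
  show cnt (pivElt q l hq) ((insert t A) \ {i}) = l - 1
  unfold cnt
  have he : ((insert t A) \ {i}).filter (· < pivElt q l hq) = Lset q l \ {i} := by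
    ext x
    simp only [Finset.mem_filter, Finset.mem_sdiff, Finset.mem_singleton, lt_piv_iff hq]
    constructor
    · rintro ⟨⟨h1, h2⟩, h3⟩; exact ⟨h3, h2⟩
    · rintro ⟨h1, h2⟩; exact ⟨⟨hLsub h1, h2⟩, h1⟩
  rw [he, Finset.card_sdiff_of_subset (by simpa using hi), card_Lset hq]
  simp

/-- sup bound for `insert piv ((insert t A) \ {i})`. -/
lemma sup_bound3 (htL : t ∈ Lset q l) (hLsub : Lset q l ⊆ insert t A)
    (hgap : D (pivElt q l hq) ≤ (Lset q l).sup D) (X : Finset (Fin q))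
    (hX : X ⊆ insert t A) :
    (insert (pivElt q l hq) X).sup D ≤ D t + A.sup D := by
  rw [Finset.sup_insert]
  refine sup_le ?_ ?_
  · refine le_trans hgap (le_trans (Finset.sup_mono hLsub) ?_)
    exact le_trans (le_of_eq (Finset.sup_insert)) (le_trans (sup_le_add _ _) le_rfl)
  · exact le_trans (Finset.sup_mono hX)
      (le_trans (le_of_eq (Finset.sup_insert)) (sup_le_add _ _))

/-- Sub-case (iii), claim 1: the `j = piv` terms of `∂(corr)` match the omitted
terms over `L`. -/
lemma claim_c1 (hl : 2 ≤ l) (hgap : D (pivElt q l hq) ≤ (Lset q l).sup D)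
    (htL : t ∈ Lset q l) (htA : t ∉ A) (hLsub : Lset q l ⊆ insert t A)
    (hpiv : pivElt q l hq ∉ A) {i : Fin q} (hi : i ∈ Lset q l) :
    tm ((insert t A) \ {i})
      (((-1)^(l+1) * fsign {t} A * fsign {i} ((insert t A) \ {i})) *
        fsign {pivElt q l hq} ((insert t A) \ {i}))
      (c t)
      ((D t + A.sup D - (insert (pivElt q l hq) ((insert t A) \ {i})).sup D) +
        ((insert (pivElt q l hq) ((insert t A) \ {i})).sup D - ((insert t A) \ {i}).sup D))
    = tm ((insert t A) \ {i}) (fsign {t} A * fsign {i} ((insert t A) \ {i})) (c t)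
      ((D t + A.sup D - (insert t A).sup D) +
        ((insert t A).sup D - ((insert t A) \ {i}).sup D)) := by
  refine tm_congr rfl ?_ ?_
  · rw [fsign_piv_T0 hq htL hLsub hpiv hi]
    linear_combination (fsign {t} A * fsign {i} ((insert t A) \ {i})) * powkey hl
  · rw [tsub_add_tsub_cancel
      (sup_bound3 hq D htL hLsub hgap _ Finset.sdiff_subset)
      (Finset.sup_mono (Finset.subset_insert _ _)),
      tsub_add_tsub_cancel (sup_insert_le_add D t A)
      (Finset.sup_mono Finset.sdiff_subset)]

/-- Sub-case (iii), claim 2 (pointwise): antisymmetry of the `∂(corr)` terms with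
both deleted indices in `L`. -/
lemma claim_c2 (hl : 2 ≤ l) (hgap : D (pivElt q l hq) ≤ (Lset q l).sup D)
    (htL : t ∈ Lset q l) (htA : t ∉ A) (hLsub : Lset q l ⊆ insert t A)
    (hpiv : pivElt q l hq ∉ A) {i j : Fin q} (hi : i ∈ Lset q l) (hj : j ∈ Lset q l)
    (hij : i ≠ j) :
    tm ((insert (pivElt q l hq) ((insert t A) \ {i})) \ {j})
      (((-1)^(l+1) * fsign {t} A * fsign {i} ((insert t A) \ {i})) *
        fsign {j} ((insert (pivElt q l hq) ((insert t A) \ {i})) \ {j}))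
      (c t)
      ((D t + A.sup D - (insert (pivElt q l hq) ((insert t A) \ {i})).sup D) +
        ((insert (pivElt q l hq) ((insert t A) \ {i})).sup D -
          ((insert (pivElt q l hq) ((insert t A) \ {i})) \ {j}).sup D)) +
    tm ((insert (pivElt q l hq) ((insert t A) \ {j})) \ {i})
      (((-1)^(l+1) * fsign {t} A * fsign {j} ((insert t A) \ {j})) *
        fsign {i} ((insert (pivElt q l hq) ((insert t A) \ {j})) \ {i}))
      (c t)
      ((D t + A.sup D - (insert (pivElt q l hq) ((insert t A) \ {j})).sup D) +
        ((insert (pivElt q l hq) ((insert t A) \ {j})).sup D -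
          ((insert (pivElt q l hq) ((insert t A) \ {j})) \ {i}).sup D)) = 0 := by
  have hipiv : i ≠ pivElt q l hq := ne_piv_of_mem_Lset hq hi
  have hjpiv : j ≠ pivElt q l hq := ne_piv_of_mem_Lset hq hj
  have htpiv : t ≠ pivElt q l hq := ne_piv_of_mem_Lset hq htL
  have hpT0 : pivElt q l hq ∉ insert t A := by
    simp [htpiv.symm, hpiv]
  have hs1 : (insert (pivElt q l hq) ((insert t A) \ {i})) \ {j} =
      insert (pivElt q l hq) (((insert t A) \ {i}) \ {j}) :=
    insert_sdiff_of_ne _ (Ne.symm hjpiv)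
  have hs2 : (insert (pivElt q l hq) ((insert t A) \ {j})) \ {i} =
      insert (pivElt q l hq) (((insert t A) \ {j}) \ {i}) :=
    insert_sdiff_of_ne _ (Ne.symm hipiv)
  have hcomm : ((insert t A) \ {j}) \ {i} = ((insert t A) \ {i}) \ {j} := sdiff_sdiff_comm
  rw [hs1, hs2, hcomm]
  -- collapse exponents
  have hb1 : (insert (pivElt q l hq) (((insert t A) \ {i}) \ {j})).sup D ≤
      (insert (pivElt q l hq) ((insert t A) \ {i})).sup D := by
    rw [Finset.sup_insert, Finset.sup_insert]
    exact sup_le le_sup_left (le_trans (Finset.sup_mono Finset.sdiff_subset) le_sup_right)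
  have hb2 : (insert (pivElt q l hq) (((insert t A) \ {i}) \ {j})).sup D ≤
      (insert (pivElt q l hq) ((insert t A) \ {j})).sup D := by
    rw [Finset.sup_insert, Finset.sup_insert, ← hcomm]
    exact sup_le le_sup_left (le_trans (Finset.sup_mono Finset.sdiff_subset) le_sup_right)
  rw [tsub_add_tsub_cancel (sup_bound3 hq D htL hLsub hgap _ Finset.sdiff_subset) hb1,
    tsub_add_tsub_cancel (sup_bound3 hq D htL hLsub hgap _ Finset.sdiff_subset) hb2]
  -- reduce the inserted-pivot signs
  have hpv1 : pivElt q l hq ∉ ((insert t A) \ {i}) \ {j} := by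
    simp only [Finset.mem_sdiff]
    exact fun h => hpT0 h.1.1
  have hf1 : fsign {j} (insert (pivElt q l hq) (((insert t A) \ {i}) \ {j})) =
      fsign {j} (((insert t A) \ {i}) \ {j}) :=
    fsign_insert_of_ge (by simp) hjpiv hpv1 (not_piv_lt hq hj)
  have hf2 : fsign {i} (insert (pivElt q l hq) (((insert t A) \ {i}) \ {j})) =
      fsign {i} (((insert t A) \ {i}) \ {j}) :=
    fsign_insert_of_ge (by simp) hipiv hpv1 (not_piv_lt hq hi)
  rw [hf1, hf2]
  refine tm_add_zero _ _ ?_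
  have hSL := SL2 (S := insert t A) (hLsub hi) (hLsub hj) hij
  rw [hcomm] at hSL
  linear_combination ((-1:ℤ)^(l+1) * fsign {t} A) * hSL

/-- Sub-case (iii), claim 3 (pointwise): the `∂(corr)` terms with one index in
`L` and one outside cancel against the scaled corrections of the faces. -/
lemma claim_c3 (hl : 2 ≤ l) (hgap : D (pivElt q l hq) ≤ (Lset q l).sup D)
    (htL : t ∈ Lset q l) (htA : t ∉ A) (hLsub : Lset q l ⊆ insert t A)
    (hpiv : pivElt q l hq ∉ A) {i j : Fin q} (hi : i ∈ Lset q l)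
    (hjA : j ∈ A) (hjL : j ∉ Lset q l) :
    tm ((insert (pivElt q l hq) ((insert t A) \ {i})) \ {j})
      (((-1)^(l+1) * fsign {t} A * fsign {i} ((insert t A) \ {i})) *
        fsign {j} ((insert (pivElt q l hq) ((insert t A) \ {i})) \ {j}))
      (c t)
      ((D t + A.sup D - (insert (pivElt q l hq) ((insert t A) \ {i})).sup D) +
        ((insert (pivElt q l hq) ((insert t A) \ {i})).sup D -
          ((insert (pivElt q l hq) ((insert t A) \ {i})) \ {j}).sup D)) +
    tm ((insert (pivElt q l hq) (insert t (A \ {j}))) \ {i})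
      (fsign {j} (A \ {j}) * ((-1)^(l+1) * fsign {t} (A \ {j}) *
        fsign {i} ((insert t (A \ {j})) \ {i})))
      (1 * c t)
      ((A.sup D - (A \ {j}).sup D) +
        (D t + (A \ {j}).sup D - ((insert (pivElt q l hq) (insert t (A \ {j}))) \ {i}).sup D))
      = 0 := by
  have hipiv : i ≠ pivElt q l hq := ne_piv_of_mem_Lset hq hi
  have htpiv : t ≠ pivElt q l hq := ne_piv_of_mem_Lset hq htL
  have hjpiv : j ≠ pivElt q l hq := fun h => hpiv (h ▸ hjA)
  have htj : t ≠ j := fun h => htA (h ▸ hjA)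
  have hij : i ≠ j := fun h => hjL (h ▸ hi)
  have hpT0 : pivElt q l hq ∉ insert t A := by simp [htpiv.symm, hpiv]
  have hpivlt : pivElt q l hq < j := piv_lt_of hq hjL hjpiv
  have htlt : t < j := by
    have h1 := mem_Lset.1 htL
    rw [mem_Lset, not_lt] at hjL
    simp only [Fin.lt_def]; omega
  -- set normalizations
  have hset0 : insert t (A \ {j}) = (insert t A) \ {j} := (insert_sdiff_of_ne A htj).symm
  have hs1 : (insert (pivElt q l hq) ((insert t A) \ {i})) \ {j} =
      insert (pivElt q l hq) (((insert t A) \ {i}) \ {j}) :=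
    insert_sdiff_of_ne _ (Ne.symm hjpiv)
  have hs2 : (insert (pivElt q l hq) ((insert t A) \ {j})) \ {i} =
      insert (pivElt q l hq) (((insert t A) \ {j}) \ {i}) :=
    insert_sdiff_of_ne _ (Ne.symm hipiv)
  have hcomm : ((insert t A) \ {j}) \ {i} = ((insert t A) \ {i}) \ {j} := sdiff_sdiff_comm
  rw [one_mul, hset0, hs1, hs2, hcomm]
  -- exponent collapse
  have hb1 : (insert (pivElt q l hq) (((insert t A) \ {i}) \ {j})).sup D ≤
      (insert (pivElt q l hq) ((insert t A) \ {i})).sup D := by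
    rw [Finset.sup_insert, Finset.sup_insert]
    exact sup_le le_sup_left (le_trans (Finset.sup_mono Finset.sdiff_subset) le_sup_right)
  rw [tsub_add_tsub_cancel (sup_bound3 hq D htL hLsub hgap _ Finset.sdiff_subset) hb1]
  have hsb : (insert (pivElt q l hq) (((insert t A) \ {i}) \ {j})).sup D ≤
      D t + (A \ {j}).sup D := by
    rw [Finset.sup_insert]
    refine sup_le (le_trans hgap (le_trans (Lsup_le D htL hLsub hjL) (sup_le_add _ _))) ?_
    refine le_trans (Finset.sup_mono
      (show (((insert t A) \ {i}) \ {j}) ⊆ insert t (A \ {j}) from ?_)) ?_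
    · rw [hset0]
      intro x hx
      simp only [Finset.mem_sdiff] at hx ⊢
      exact ⟨hx.1.1, hx.2⟩
    · exact sup_insert_le_add D t (A \ {j})
  rw [exp1 (Finset.sup_mono Finset.sdiff_subset) hsb]
  -- sign rewrites
  have hpv1 : pivElt q l hq ∉ ((insert t A) \ {i}) \ {j} := by
    simp only [Finset.mem_sdiff]
    exact fun h => hpT0 h.1.1
  have hf1 : fsign {j} (insert (pivElt q l hq) (((insert t A) \ {i}) \ {j})) =
      - fsign {j} (((insert t A) \ {i}) \ {j}) :=
    fsign_insert_of_lt (by simp) hpv1 hpivlt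
  have hft : fsign {t} (A \ {j}) = fsign {t} A := by
    have h1 := fsign_insert_of_ge (j := t) (a := j) (S := A \ {j})
      (by simp [htA]) htj (by simp) (not_lt.2 htlt.le)
    rw [insert_sdiff_self' hjA] at h1
    exact h1.symm
  have hfj : fsign {j} ((insert t A) \ {j}) = - fsign {j} (A \ {j}) := by
    rw [← hset0]
    exact fsign_insert_of_lt (by simp) (by simp [htA]) htlt
  rw [hf1, hft]
  refine tm_add_zero _ _ ?_
  have hSL := SL2 (S := insert t A) (hLsub hi) (Finset.mem_insert_of_mem hjA) hij
  rw [hcomm] at hSL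
  linear_combination (-((-1:ℤ)^(l+1) * fsign {t} A)) * hSL +
    (((-1:ℤ)^(l+1) * fsign {t} A) * fsign {i} (((insert t A) \ {i}) \ {j})) * hfj

end Context3
end
end Htpy
namespace Htpy
open MvPolynomial Finset

noncomputable section
set_option maxHeartbeats 3200000
variable {k : Type*} [Field k] {n q : ℕ}

section BigDefs
variable (l : ℕ) (hq : l < q) (D : Fin q → (Fin n →₀ ℕ)) (c : Fin q → MvPolynomial (Fin n) k)

def XX (A : Finset (Fin q)) (t i : Fin q) : TotMod k n q :=
  tm ((insert t A) \ {i}) (fsign {t} A * fsign {i} ((insert t A) \ {i})) (c t)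
    ((D t + A.sup D - (insert t A).sup D) +
      ((insert t A).sup D - ((insert t A) \ {i}).sup D))

def YY (A : Finset (Fin q)) (t i : Fin q) : TotMod k n q :=
  tm (insert t (A \ {i})) (fsign {i} (A \ {i}) * fsign {t} (A \ {i})) (1 * c t)
    ((A.sup D - (A \ {i}).sup D) +
      (D t + (A \ {i}).sup D - (insert t (A \ {i})).sup D))

def HH (A : Finset (Fin q)) (t i j : Fin q) : TotMod k n q :=
  tm ((insert (pivElt q l hq) ((insert t A) \ {i})) \ {j})
    (((-1)^(l+1) * fsign {t} A * fsign {i} ((insert t A) \ {i})) *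
      fsign {j} ((insert (pivElt q l hq) ((insert t A) \ {i})) \ {j}))
    (c t)
    ((D t + A.sup D - (insert (pivElt q l hq) ((insert t A) \ {i})).sup D) +
      ((insert (pivElt q l hq) ((insert t A) \ {i})).sup D -
        ((insert (pivElt q l hq) ((insert t A) \ {i})) \ {j}).sup D))

def WW (A : Finset (Fin q)) (t j i : Fin q) : TotMod k n q :=
  tm ((insert (pivElt q l hq) (insert t (A \ {j}))) \ {i})
    (fsign {j} (A \ {j}) * ((-1)^(l+1) * fsign {t} (A \ {j}) *
      fsign {i} ((insert t (A \ {j})) \ {i})))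
    (1 * c t)
    ((A.sup D - (A \ {j}).sup D) +
      (D t + (A \ {j}).sup D - ((insert (pivElt q l hq) (insert t (A \ {j}))) \ {i}).sup D))


end BigDefs

/-- **The difference lemma**: `∂ ∘ (σ − σ_full) + (σ − σ_full) ∘ ∂ = 0` on basis
elements of the pivot subcomplex. -/
lemma diff {l : ℕ} (hl : 2 ≤ l) (hq : l < q) (D : Fin q → (Fin n →₀ ℕ))
    (c : Fin q → MvPolynomial (Fin n) k)
    (hgap : D (pivElt q l hq) ≤ (Lset q l).sup D)
    (A : Finset (Fin q)) (hA : ¬ Lset q l ⊆ A) :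
    taylorD k n q D (delta hq D c A) +
      (sigmaMap k n q l hq D c (taylorD k n q D (Finsupp.single A 1)) -
        sigF D c (taylorD k n q D (Finsupp.single A 1))) = 0 := by
  have hT : taylorD k n q D (Finsupp.single A (1 : MvPolynomial (Fin n) k)) =
      ∑ i ∈ A, tm (A \ {i}) (fsign {i} (A \ {i})) 1 (A.sup D - (A \ {i}).sup D) := by
    rw [← tm_one, taylorD_tm]
    exact Finset.sum_congr rfl fun i _ => tm_congr rfl (one_mul _) (zero_add _)
  have hDT : sigmaMap k n q l hq D c (taylorD k n q D (Finsupp.single A 1)) -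
      sigF D c (taylorD k n q D (Finsupp.single A 1)) =
      ∑ i ∈ A, ((fsign {i} (A \ {i}) : MvPolynomial (Fin n) k) * 1 *
        monomial (A.sup D - (A \ {i}).sup D) 1) • delta hq D c (A \ {i}) := by
    rw [hT, map_sum, map_sum, ← Finset.sum_sub_distrib]
    exact Finset.sum_congr rfl fun i _ => sigma_sub_sigF hq D c _ _
  by_cases hc : (A ∩ Lset q l).card = l - 1
  swap
  · -- boring case: everything vanishes
    rw [delta_zero hq D c hc, map_zero, hDT, zero_add]
    have hmne : (A ∩ Lset q l).card ≠ l := by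
      intro h
      exact hA (by
        have : A ∩ Lset q l = Lset q l :=
          Finset.eq_of_subset_of_card_le Finset.inter_subset_right
            (by rw [h, card_Lset hq])
        exact fun x hx => Finset.mem_inter.1 (this ▸ hx) |>.1)
    have hmle : (A ∩ Lset q l).card ≤ l := by
      have h := Finset.card_le_card (Finset.inter_subset_right : A ∩ Lset q l ⊆ Lset q l)
      rwa [card_Lset hq] at h
    refine Finset.sum_eq_zero fun i hi => ?_
    have hsub : (A \ {i}) ∩ Lset q l ⊆ A ∩ Lset q l :=
      Finset.inter_subset_inter Finset.sdiff_subset le_rfl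
    have := Finset.card_le_card hsub
    rw [delta_zero hq D c (by omega), smul_zero]
  -- main case
  have htB : Lset q l \ A = {tOf q l hq A} := Lset_sdiff_eq hq hc (by omega)
  set t : Fin q := tOf q l hq A with hteq
  have htmem : t ∈ Lset q l \ A := by rw [htB]; exact Finset.mem_singleton_self t
  have htL : t ∈ Lset q l := (Finset.mem_sdiff.1 htmem).1
  have htA : t ∉ A := (Finset.mem_sdiff.1 htmem).2
  have hLsub : Lset q l ⊆ insert t A := by
    intro x hx
    by_cases hxA : x ∈ A
    · exact Finset.mem_insert_of_mem hxA
    · have : x ∈ Lset q l \ A := Finset.mem_sdiff.2 ⟨hx, hxA⟩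
      rw [htB, Finset.mem_singleton] at this
      rw [this]
      exact Finset.mem_insert_self _ _
  have hpivL : pivElt q l hq ∉ Lset q l := piv_notMem_Lset hq
  -- facts about faces A \ {i}
  have hface : ∀ i ∈ A.filter (fun x => x ∉ Lset q l),
      ((A \ {i}) ∩ Lset q l).card = l - 1 ∧ Lset q l \ (A \ {i}) = {tOf q l hq (A \ {i})} ∧
        tOf q l hq (A \ {i}) = t := by
    intro i hi
    obtain ⟨hiA, hiL⟩ := Finset.mem_filter.1 hi
    have h1 : (A \ {i}) ∩ Lset q l = A ∩ Lset q l := by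
      ext x
      simp only [Finset.mem_inter, Finset.mem_sdiff, Finset.mem_singleton]
      constructor
      · rintro ⟨⟨h1, _⟩, h2⟩; exact ⟨h1, h2⟩
      · rintro ⟨h1, h2⟩; exact ⟨⟨h1, fun h => hiL (h ▸ h2)⟩, h2⟩
    have h2 : Lset q l \ (A \ {i}) = {t} := by
      rw [← htB]
      ext x
      simp only [Finset.mem_sdiff, Finset.mem_singleton]
      constructor
      · rintro ⟨h1, h2⟩
        refine ⟨h1, fun hxA => h2 ⟨hxA, fun h => hiL (h ▸ h1)⟩⟩
      · rintro ⟨h1, h2⟩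
        exact ⟨h1, fun h => h2 h.1⟩
    have h3 : tOf q l hq (A \ {i}) = t := tOf_eq hq h2
    refine ⟨by rw [h1]; exact hc, by rw [h3]; exact h2, h3⟩
  -- the `i ∈ L` terms of the boundary sum vanish
  have hzeroL : ∀ i ∈ A.filter (· ∈ Lset q l),
      ((fsign {i} (A \ {i}) : MvPolynomial (Fin n) k) * 1 *
        monomial (A.sup D - (A \ {i}).sup D) 1) • delta hq D c (A \ {i}) = 0 := by
    intro i hi
    obtain ⟨hiA, hiL⟩ := Finset.mem_filter.1 hi
    have h1 : (A \ {i}) ∩ Lset q l = (A ∩ Lset q l) \ {i} := by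
      ext x
      simp only [Finset.mem_inter, Finset.mem_sdiff, Finset.mem_singleton]
      tauto
    have h2 : ((A \ {i}) ∩ Lset q l).card = l - 2 := by
      rw [h1, Finset.card_sdiff_of_subset (by simp [hiA, hiL]), hc, Finset.card_singleton]
      omega
    rw [delta_zero hq D c (by omega), smul_zero]
  have hsplitDT : (∑ i ∈ A, ((fsign {i} (A \ {i}) : MvPolynomial (Fin n) k) * 1 *
        monomial (A.sup D - (A \ {i}).sup D) 1) • delta hq D c (A \ {i})) =
      ∑ i ∈ A.filter (fun x => x ∉ Lset q l),
        ((fsign {i} (A \ {i}) : MvPolynomial (Fin n) k) * 1 *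
          monomial (A.sup D - (A \ {i}).sup D) 1) • delta hq D c (A \ {i}) := by
    rw [← Finset.sum_filter_add_sum_filter_not A (· ∈ Lset q l),
      Finset.sum_congr rfl hzeroL, Finset.sum_const_zero, zero_add]
  by_cases hpiv : pivElt q l hq ∈ A
  · -- Sub-case (ii): piv ∈ A
    have hdA := delta_two hq D c hc htB hpiv
    rw [← hteq] at hdA
    have hpivmem : pivElt q l hq ∈ A.filter (fun x => x ∉ Lset q l) :=
      Finset.mem_filter.2 ⟨hpiv, hpivL⟩
    have E1 : taylorD k n q D (delta hq D c A) =
        -((∑ i ∈ Lset q l, XX D c A t i) +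
          ∑ i ∈ A.filter (fun x => x ∉ Lset q l), XX D c A t i) := by
      rw [hdA, map_neg, taylorD_tm]
      congr 1
      rw [← Finset.sum_filter_add_sum_filter_not (insert t A) (· ∈ Lset q l),
        filter_insert_L htL hLsub, filter_insert_notL htL]
      rfl
    -- the boundary sum
    have E2 : (∑ i ∈ A.filter (fun x => x ∉ Lset q l),
        ((fsign {i} (A \ {i}) : MvPolynomial (Fin n) k) * 1 *
          monomial (A.sup D - (A \ {i}).sup D) 1) • delta hq D c (A \ {i})) =
        (∑ i ∈ A.filter (fun x => x ∉ Lset q l) \ {pivElt q l hq}, -(YY D c A t i)) +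
          (-(YY D c A t (pivElt q l hq)) + ∑ i ∈ Lset q l, XX D c A t i) := by
      rw [Finset.sum_eq_sum_sdiff_singleton_add hpivmem]
      congr 1
      · refine Finset.sum_congr rfl fun i hi => ?_
        obtain ⟨hi', hipiv⟩ := Finset.mem_sdiff.1 hi
        have hipiv' : i ≠ pivElt q l hq := by simpa using hipiv
        obtain ⟨hcd, hLi, htOfi⟩ := hface i hi'
        obtain ⟨hiA, hiL⟩ := Finset.mem_filter.1 hi'
        have hpivmem2 : pivElt q l hq ∈ A \ {i} := by
          simp [Finset.mem_sdiff, hpiv, Ne.symm hipiv']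
        have hδ := delta_two hq D c hcd hLi hpivmem2
        rw [htOfi] at hδ
        rw [hδ, smul_neg, smul_tm]
        rfl
      · obtain ⟨hcd, hLi, htOfi⟩ := hface (pivElt q l hq) hpivmem
        have hpivnm : pivElt q l hq ∉ A \ {pivElt q l hq} := by simp
        have hδ := delta_three hq D c hcd hLi hpivnm
        rw [htOfi] at hδ
        rw [hδ, smul_add, smul_neg, smul_tm,
          claim2 hq D c hl hgap htL htA hLsub hc hpiv]
        rfl
    rw [E1, hDT, hsplitDT, E2]
    have hXY : (∑ i ∈ A.filter (fun x => x ∉ Lset q l), XX D c A t i) +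
        (∑ i ∈ A.filter (fun x => x ∉ Lset q l), YY D c A t i) = 0 := by
      rw [← Finset.sum_add_distrib]
      refine Finset.sum_eq_zero fun i hi => ?_
      obtain ⟨hiA, _⟩ := Finset.mem_filter.1 hi
      exact cross D c A t i htA hiA
    have hmerge : (∑ i ∈ A.filter (fun x => x ∉ Lset q l) \ {pivElt q l hq},
        -(YY D c A t i)) + -(YY D c A t (pivElt q l hq)) =
        -(∑ i ∈ A.filter (fun x => x ∉ Lset q l), YY D c A t i) := by
      rw [← Finset.sum_neg_distrib,
        ← Finset.sum_eq_sum_sdiff_singleton_add hpivmem (fun i => -(YY D c A t i)),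
        Finset.sum_neg_distrib]
    calc -((∑ i ∈ Lset q l, XX D c A t i) +
          ∑ i ∈ A.filter (fun x => x ∉ Lset q l), XX D c A t i) +
        ((∑ i ∈ A.filter (fun x => x ∉ Lset q l) \ {pivElt q l hq}, -(YY D c A t i)) +
          (-(YY D c A t (pivElt q l hq)) + ∑ i ∈ Lset q l, XX D c A t i))
        = -(∑ i ∈ A.filter (fun x => x ∉ Lset q l), XX D c A t i) +
          ((∑ i ∈ A.filter (fun x => x ∉ Lset q l) \ {pivElt q l hq}, -(YY D c A t i)) +
            -(YY D c A t (pivElt q l hq))) := by abel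
      _ = -(∑ i ∈ A.filter (fun x => x ∉ Lset q l), XX D c A t i) +
          -(∑ i ∈ A.filter (fun x => x ∉ Lset q l), YY D c A t i) := by rw [hmerge]
      _ = -((∑ i ∈ A.filter (fun x => x ∉ Lset q l), XX D c A t i) +
          (∑ i ∈ A.filter (fun x => x ∉ Lset q l), YY D c A t i)) := by abel
      _ = 0 := by rw [hXY, neg_zero]
  · -- Sub-case (iii): piv ∉ A
    have hdA := delta_three hq D c hc htB hpiv
    rw [← hteq] at hdA
    have htpiv : t ≠ pivElt q l hq := ne_piv_of_mem_Lset hq htL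
    have hpT0 : pivElt q l hq ∉ insert t A := by simp [htpiv.symm, hpiv]
    have E1a : taylorD k n q D (tm (insert t A) (fsign {t} A) (c t)
        (D t + A.sup D - (insert t A).sup D)) =
        (∑ i ∈ Lset q l, XX D c A t i) +
          ∑ i ∈ A.filter (fun x => x ∉ Lset q l), XX D c A t i := by
      rw [taylorD_tm]
      rw [← Finset.sum_filter_add_sum_filter_not (insert t A) (· ∈ Lset q l),
        filter_insert_L htL hLsub, filter_insert_notL htL]
      rfl
    have E1b : taylorD k n q D (sigCorr k n q l hq D c A t) =
        ∑ i ∈ Lset q l, (XX D c A t i +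
          ((∑ j ∈ Lset q l \ {i}, HH l hq D c A t i j) +
            ∑ j ∈ A.filter (fun x => x ∉ Lset q l), HH l hq D c A t i j)) := by
      rw [sigCorr_eq, map_sum]
      refine Finset.sum_congr rfl fun i hi => ?_
      have hipiv : i ≠ pivElt q l hq := ne_piv_of_mem_Lset hq hi
      have hBi : (insert (pivElt q l hq) (insert t A)) \ {i} =
          insert (pivElt q l hq) ((insert t A) \ {i}) :=
        insert_sdiff_of_ne _ (Ne.symm hipiv)
      rw [hBi, taylorD_tm]
      have hpnm : pivElt q l hq ∉ (insert t A) \ {i} := by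
        simp only [Finset.mem_sdiff]
        exact fun h => hpT0 h.1
      rw [Finset.sum_insert hpnm]
      congr 1
      · rw [erase_insert' hpnm]
        exact claim_c1 hq D c hl hgap htL htA hLsub hpiv hi
      · rw [← Finset.sum_filter_add_sum_filter_not ((insert t A) \ {i}) (· ∈ Lset q l),
          filter_sdiff_L htL hLsub hi, filter_sdiff_notL htL hi]
        rfl
    have E2 : (∑ i ∈ A.filter (fun x => x ∉ Lset q l),
        ((fsign {i} (A \ {i}) : MvPolynomial (Fin n) k) * 1 *
          monomial (A.sup D - (A \ {i}).sup D) 1) • delta hq D c (A \ {i})) =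
        ∑ i ∈ A.filter (fun x => x ∉ Lset q l),
          (-(YY D c A t i) + ∑ i' ∈ Lset q l, WW l hq D c A t i i') := by
      refine Finset.sum_congr rfl fun i hi => ?_
      obtain ⟨hcd, hLi, htOfi⟩ := hface i hi
      obtain ⟨hiA, hiL⟩ := Finset.mem_filter.1 hi
      have hpnm : pivElt q l hq ∉ A \ {i} := by
        simp only [Finset.mem_sdiff]
        exact fun h => hpiv h.1
      have hδ := delta_three hq D c hcd hLi hpnm
      rw [htOfi] at hδ
      rw [hδ, smul_add, smul_neg, smul_tm, sigCorr_eq, Finset.smul_sum]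
      congr 1
      refine Finset.sum_congr rfl fun i' _ => ?_
      rw [smul_tm]
      rfl
    have hG2 : (∑ i ∈ Lset q l, ∑ j ∈ Lset q l \ {i}, HH l hq D c A t i j) = 0 := by
      rw [Finset.sum_sigma']
      refine Finset.sum_involution (fun p _ => ⟨p.2, p.1⟩) ?_ ?_ ?_ ?_
      · intro p hp
        obtain ⟨h1, h2⟩ := Finset.mem_sigma.1 hp
        obtain ⟨h2L, h2ne⟩ := Finset.mem_sdiff.1 h2
        have h2ne' : p.2 ≠ p.1 := by simpa using h2ne
        have hne : p.1 ≠ p.2 := fun h => h2ne' h.symm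
        exact claim_c2 hq D c hl hgap htL htA hLsub hpiv h1 h2L hne
      · intro p hp _
        obtain ⟨h1, h2⟩ := Finset.mem_sigma.1 hp
        intro hcontr
        have h2ne' : p.2 ≠ p.1 := by simpa using (Finset.mem_sdiff.1 h2).2
        exact h2ne' (congrArg Sigma.fst hcontr)
      · intro p hp
        obtain ⟨h1, h2⟩ := Finset.mem_sigma.1 hp
        obtain ⟨h2L, h2ne⟩ := Finset.mem_sdiff.1 h2
        refine Finset.mem_sigma.2 ⟨h2L, Finset.mem_sdiff.2 ⟨h1, ?_⟩⟩
        simp only [Finset.mem_singleton]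
        have h2ne' : p.2 ≠ p.1 := by simpa using h2ne
        exact fun h => h2ne' h.symm
      · intro p hp
        rfl
    have hG3 : (∑ i ∈ Lset q l, ∑ j ∈ A.filter (fun x => x ∉ Lset q l),
          HH l hq D c A t i j) +
        (∑ i ∈ A.filter (fun x => x ∉ Lset q l), ∑ i' ∈ Lset q l,
          WW l hq D c A t i i') = 0 := by
      rw [Finset.sum_comm (s := A.filter (fun x => x ∉ Lset q l)) (t := Lset q l)]
      rw [← Finset.sum_add_distrib]
      refine Finset.sum_eq_zero fun i hi => ?_
      rw [← Finset.sum_add_distrib]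
      refine Finset.sum_eq_zero fun j hj => ?_
      obtain ⟨hjA, hjL⟩ := Finset.mem_filter.1 hj
      exact claim_c3 hq D c hl hgap htL htA hLsub hpiv hi hjA hjL
    have hXY : (∑ i ∈ A.filter (fun x => x ∉ Lset q l), XX D c A t i) +
        (∑ i ∈ A.filter (fun x => x ∉ Lset q l), YY D c A t i) = 0 := by
      rw [← Finset.sum_add_distrib]
      refine Finset.sum_eq_zero fun i hi => ?_
      obtain ⟨hiA, _⟩ := Finset.mem_filter.1 hi
      exact cross D c A t i htA hiA
    rw [hdA, map_add, map_neg, E1a, E1b, hDT, hsplitDT, E2,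
      Finset.sum_add_distrib, Finset.sum_add_distrib, Finset.sum_add_distrib,
      Finset.sum_neg_distrib]
    calc -((∑ i ∈ Lset q l, XX D c A t i) +
            ∑ i ∈ A.filter (fun x => x ∉ Lset q l), XX D c A t i) +
          ((∑ i ∈ Lset q l, XX D c A t i) +
            ((∑ i ∈ Lset q l, ∑ j ∈ Lset q l \ {i}, HH l hq D c A t i j) +
              ∑ i ∈ Lset q l, ∑ j ∈ A.filter (fun x => x ∉ Lset q l), HH l hq D c A t i j)) +
          (-(∑ i ∈ A.filter (fun x => x ∉ Lset q l), YY D c A t i) +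
            ∑ i ∈ A.filter (fun x => x ∉ Lset q l), ∑ i' ∈ Lset q l, WW l hq D c A t i i')
        = (∑ i ∈ Lset q l, ∑ j ∈ Lset q l \ {i}, HH l hq D c A t i j) +
          ((∑ i ∈ Lset q l, ∑ j ∈ A.filter (fun x => x ∉ Lset q l), HH l hq D c A t i j) +
            (∑ i ∈ A.filter (fun x => x ∉ Lset q l), ∑ i' ∈ Lset q l, WW l hq D c A t i i')) +
          -((∑ i ∈ A.filter (fun x => x ∉ Lset q l), XX D c A t i) +
            (∑ i ∈ A.filter (fun x => x ∉ Lset q l), YY D c A t i)) := by abel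
      _ = 0 := by rw [hG2, hG3, hXY, neg_zero, zero_add, add_zero]

end
end Htpy
namespace Htpy
open MvPolynomial Finset

noncomputable section
set_option maxHeartbeats 1600000
variable {k : Type*} [Field k] {n q : ℕ}

lemma key {l : ℕ} (hl : 2 ≤ l) (hq : l < q) (D : Fin q → (Fin n →₀ ℕ))
    (c : Fin q → MvPolynomial (Fin n) k)
    (hgap : D (pivElt q l hq) ≤ (Lset q l).sup D)
    (A : Finset (Fin q)) (hA : ¬ Lset q l ⊆ A) :
    taylorD k n q D (sigmaMap k n q l hq D c (Finsupp.single A 1)) +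
      sigmaMap k n q l hq D c (taylorD k n q D (Finsupp.single A 1)) =
    aElt k n q D c • Finsupp.single A 1 := by
  have hfull := full D c A
  have hdiff := diff hl hq D c hgap A hA
  have hσ : sigmaMap k n q l hq D c (Finsupp.single A 1) =
      sigF D c (Finsupp.single A 1) + delta hq D c A := by
    unfold delta; abel
  have hσ2 : sigmaMap k n q l hq D c (taylorD k n q D (Finsupp.single A 1)) =
      sigF D c (taylorD k n q D (Finsupp.single A 1)) +
        (sigmaMap k n q l hq D c (taylorD k n q D (Finsupp.single A 1)) -
          sigF D c (taylorD k n q D (Finsupp.single A 1))) := by abel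
  rw [hσ, map_add, hσ2]
  calc taylorD k n q D (sigF D c (Finsupp.single A 1)) +
        taylorD k n q D (delta hq D c A) +
        (sigF D c (taylorD k n q D (Finsupp.single A 1)) +
          (sigmaMap k n q l hq D c (taylorD k n q D (Finsupp.single A 1)) -
            sigF D c (taylorD k n q D (Finsupp.single A 1))))
      = (taylorD k n q D (sigF D c (Finsupp.single A 1)) +
          sigF D c (taylorD k n q D (Finsupp.single A 1))) +
        (taylorD k n q D (delta hq D c A) +
          (sigmaMap k n q l hq D c (taylorD k n q D (Finsupp.single A 1)) -
            sigF D c (taylorD k n q D (Finsupp.single A 1)))) := by abel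
    _ = aElt k n q D c • Finsupp.single A 1 := by rw [hfull, hdiff, add_zero]

end
end Htpy


/-- **The homotopy identity.**
For each `s ∈ [r]`, the map `∂σ_{e_s} + σ_{e_s}∂` equals multiplication by `a_s`
on the pivot resolution `T_{1,…,l}`. -/
theorem homotopy_eq_smul {k : Type*} [Field k] {n q l : ℕ}
    (hl : 2 ≤ l) (hq : l < q)
    (D : Fin q → (Fin n →₀ ℕ))
    (hne : ∀ i : Fin q, D i ≠ 0)
    (hmin : ∀ i j : Fin q, i ≠ j → ¬ lcmMono k n q D {i} ∣ lcmMono k n q D {j})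
    (hgap : lcmMono k n q D {pivElt q l hq} ∣ lcmMono k n q D (Lset q l))
    (r : ℕ) (a : Fin r → Fin q → MvPolynomial (Fin n) k)
    (s : Fin r) :
    ∀ x ∈ subcx k n q (pivotΩ (Lset q l)),
      taylorD k n q D (sigmaMap k n q l hq D (a s) x) +
        sigmaMap k n q l hq D (a s) (taylorD k n q D x) =
      aElt k n q D (a s) • x := by
  intro x hx
  have hgap' : D (pivElt q l hq) ≤ (Lset q l).sup D := by
    have h := hgap
    rw [lcmMono, lcmMono, Finset.sup_singleton,
      MvPolynomial.monomial_dvd_monomial] at h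
    rcases h.1 with h1 | h1
    · exact absurd h1 one_ne_zero
    · exact h1
  rw [subcx, Finsupp.mem_supported] at hx
  conv_lhs => rw [← Finsupp.sum_single x]
  conv_rhs => rw [← Finsupp.sum_single x]
  rw [map_finsuppSum, map_finsuppSum, map_finsuppSum, map_finsuppSum,
    Finsupp.smul_sum]
  rw [Finsupp.sum, Finsupp.sum, Finsupp.sum, ← Finset.sum_add_distrib]
  refine Finset.sum_congr rfl fun τ hτ => ?_
  have hτΩ : ¬ Lset q l ⊆ τ := by
    have h := hx (Finset.mem_coe.2 hτ)
    rwa [pivotΩ, Set.mem_setOf_eq] at h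
  have hkey := Htpy.key hl hq D (a s) hgap' τ hτΩ
  have h1 : (Finsupp.single τ (x τ) : TotMod k n q) = (x τ) • Finsupp.single τ 1 := by
    rw [Finsupp.smul_single, smul_eq_mul, mul_one]
  rw [h1, map_smul, map_smul, map_smul, map_smul, ← smul_add, hkey, smul_comm]
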